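/- Let Θ be an MLL proof net and let Θ' be obtained from Θ by replacing a single ⊗-link (with premises A, B and conclusion A⊗B) by a ⅋-link with the same premises. Then Θ' is not an MLL proof net: there is a DR-switching S' for Θ' such that Θ'_{S'} is disconnected. -/

import Mathlib

/-- An MLL link: an ID-link (axiom link) with two conclusions,
a tensor link or a par link with two premises and one conclusion. -/
inductive MLLLink (V : Type) where
  | idl (c₁ c₂ : V)
  | tensor (a b c : V)
  | par (a b c : V)
deriving DecidableEq

namespace MLLLink
variable {V V' : Type}

def prems : MLLLink V → List V
  | idl _ _ => []
  | tensor a b _ => [a, b]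
  | par a b _ => [a, b]

def concls : MLLLink V → List V
  | idl c₁ c₂ => [c₁, c₂]
  | tensor _ _ c => [c]
  | par _ _ c => [c]

def isId : MLLLink V → Bool
  | idl _ _ => true
  | _ => false

def isTensor : MLLLink V → Bool
  | tensor _ _ _ => true
  | _ => false

def isPar : MLLLink V → Bool
  | par _ _ _ => true
  | _ => false

/-- Relabel the vertices of a link along a map. -/
def map (f : V → V') : MLLLink V → MLLLink V'
  | idl c₁ c₂ => idl (f c₁) (f c₂)
  | tensor a b c => tensor (f a) (f b) (f c)
  | par a b c => par (f a) (f b) (f c)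

/-- Forget whether a multiplicative link is ⊗ or ⅋ (normalizing ⅋ to ⊗). -/
def forget : MLLLink V → MLLLink V
  | par a b c => tensor a b c
  | L => L

end MLLLink

/-- An MLL proof structure on the set `V` of formula occurrences:
every occurrence is the conclusion of exactly one link and the premise of
at most one link, and the occurrences appearing in a link are distinct. -/
structure MLLProofStructure (V : Type) [DecidableEq V] where
  links : Finset (MLLLink V)
  concl_exists : ∀ v : V, ∃ L ∈ links, v ∈ L.concls
  concl_unique : ∀ v : V, ∀ L ∈ links, ∀ L' ∈ links,
      v ∈ L.concls → v ∈ L'.concls → L = L'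
  prem_unique : ∀ v : V, ∀ L ∈ links, ∀ L' ∈ links,
      v ∈ L.prems → v ∈ L'.prems → L = L'
  nodup : ∀ L ∈ links, (L.prems ++ L.concls).Nodup

variable {V : Type} [DecidableEq V]

/-- The edge generated by a link under a DR-switching `S`
(`S L = true` selects the left premise of a ⅋-link). -/
def switchEdge (S : MLLLink V → Bool) (L : MLLLink V) (v w : V) : Prop :=
  match L with
  | .idl c₁ c₂ => v = c₁ ∧ w = c₂
  | .tensor a b c => (v = a ∧ w = c) ∨ (v = b ∧ w = c)
  | .par a b c =>
      (S (.par a b c) = true ∧ v = a ∧ w = c) ∨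
      (S (.par a b c) = false ∧ v = b ∧ w = c)

def drRel (Θ : MLLProofStructure V) (S : MLLLink V → Bool) (v w : V) : Prop :=
  ∃ L ∈ Θ.links, switchEdge S L v w

/-- The Danos–Regnier graph of a proof structure under a switching. -/
def drGraph (Θ : MLLProofStructure V) (S : MLLLink V → Bool) : SimpleGraph V :=
  SimpleGraph.fromRel (drRel Θ S)

/-- Danos–Regnier criterion: a proof net is a proof structure all of whose
DR-graphs are acyclic and connected. -/
def IsProofNet (Θ : MLLProofStructure V) : Prop :=
  ∀ S : MLLLink V → Bool, (drGraph Θ S).IsAcyclic ∧ (drGraph Θ S).Connected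

/-- The edges from `A` down to the conclusion of the link of which `A` is a premise. -/
def belowEdges (Θ : MLLProofStructure V) (A : V) : Set (Sym2 V) :=
  {e | ∃ L ∈ Θ.links, A ∈ L.prems ∧ ∃ c ∈ L.concls, e = s(A, c)}

/-- The DR-graph with the edge below `A` deleted. -/
def empGraph (Θ : MLLProofStructure V) (S : MLLLink V → Bool) (A : V) : SimpleGraph V :=
  (drGraph Θ S).deleteEdges (belowEdges Θ A)

/-- The vertex set of `Θ_S^A`: the connected component of `A` in the DR-graph
after deleting the edge below `A`. -/
def empComp (Θ : MLLProofStructure V) (S : MLLLink V → Bool) (A : V) : Set V :=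
  {v | (empGraph Θ S A).Reachable A v}

/-- The empire of `A` in `Θ`. -/
def empire (Θ : MLLProofStructure V) (A : V) : Set V :=
  ⋂ S : MLLLink V → Bool, empComp Θ S A

/-- A conclusion of `Θ` is a formula occurrence which is a premise of no link. -/
def IsConclusion (Θ : MLLProofStructure V) (v : V) : Prop :=
  ∀ L ∈ Θ.links, v ∉ L.prems

/-- All premises and conclusions of a link lie in `X`. -/
def allIn (X : Set V) (L : MLLLink V) : Prop :=
  (∀ w ∈ L.prems, w ∈ X) ∧ (∀ w ∈ L.concls, w ∈ X)

/-- `X` together with the links of `Θ` contained in `X` forms a proof structure. -/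
def IsSubProofStructure (Θ : MLLProofStructure V) (X : Set V) : Prop :=
  ∀ v ∈ X, ∃ L ∈ Θ.links, v ∈ L.concls ∧ allIn X L

def subDrRel (Θ : MLLProofStructure V) (X : Set V) (S : MLLLink V → Bool)
    (v w : V) : Prop :=
  ∃ L ∈ Θ.links, allIn X L ∧ switchEdge S L v w

/-- The DR-graph of the substructure of `Θ` induced on `X`. -/
def subDrGraph (Θ : MLLProofStructure V) (X : Set V) (S : MLLLink V → Bool) :
    SimpleGraph V :=
  SimpleGraph.fromRel (subDrRel Θ X S)

/-- `X` is a sub-proof net of `Θ`: it induces a proof structure whose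
DR-graphs are all acyclic and connected (on `X`). -/
def IsSubProofNet (Θ : MLLProofStructure V) (X : Set V) : Prop :=
  IsSubProofStructure Θ X ∧
    ∀ S : MLLLink V → Bool, (subDrGraph Θ X S).IsAcyclic ∧
      ∀ v ∈ X, ∀ w ∈ X, (subDrGraph Θ X S).Reachable v w

/-- `A` is a conclusion of the substructure induced on `X`. -/
def IsConclusionOfSub (Θ : MLLProofStructure V) (X : Set V) (A : V) : Prop :=
  A ∈ X ∧ ∀ L ∈ Θ.links, allIn X L → A ∉ L.prems

/-- `e` is an isomorphism of the underlying link graphs of `Θ₁` and `Θ₂`,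
forgetting the ⊗/⅋ labels: they witness that `Θ₁` and `Θ₂` are in the same PS-family. -/
def FamilyIso {V₁ V₂ : Type} [DecidableEq V₁] [DecidableEq V₂]
    (Θ₁ : MLLProofStructure V₁) (Θ₂ : MLLProofStructure V₂) (e : V₁ ≃ V₂) : Prop :=
  Θ₁.links.image (fun L => (L.map e).forget) = Θ₂.links.image MLLLink.forget

/-- The number of (multiplicative) links at which the ⊗/⅋-labellings of
`Θ₁` and `Θ₂` differ along `e`. -/
def diffCount {V₁ V₂ : Type} [DecidableEq V₁] [DecidableEq V₂]
    (Θ₁ : MLLProofStructure V₁) (Θ₂ : MLLProofStructure V₂) (e : V₁ ≃ V₂) : ℕ :=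
  (Θ₁.links.filter (fun L => L.map e ∉ Θ₂.links)).card

section Aux
variable {V : Type} [DecidableEq V]

/-- A switching avoiding the edge `s(X, C)` at every par link. -/
def mySwitch (X C : V) : MLLLink V → Bool := fun L =>
  match L with
  | .par a _ c => decide (s(a, c) ≠ s(X, C))
  | _ => true

lemma mySwitch_par_avoid {X C a b c : V} (hab : a ≠ b) :
    (mySwitch X C (.par a b c) = true → s(a, c) ≠ s(X, C)) ∧
    (mySwitch X C (.par a b c) = false → s(b, c) ≠ s(X, C)) := by
  constructor
  · intro h
    exact of_decide_eq_true h
  · intro h hbc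
    have hac : s(a, c) = s(X, C) := not_not.mp (of_decide_eq_false h)
    rw [Sym2.eq_iff] at hac hbc
    rcases hac with ⟨rfl, rfl⟩ | ⟨rfl, rfl⟩ <;> rcases hbc with ⟨h1, h2⟩ | ⟨h1, h2⟩ <;>
      simp_all

/-- Key lemma: every switched edge of `Θ'` is a switched edge of `Θ` and
differs from `s(X, C)`. -/
lemma key_rel (Θ Θ' : MLLProofStructure V) (A B C X : V)
    (hL : MLLLink.tensor A B C ∈ Θ.links)
    (h' : Θ'.links =
      insert (MLLLink.par A B C) (Θ.links.erase (MLLLink.tensor A B C)))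
    (hT : ∀ a b c : V, MLLLink.tensor a b c ∈ Θ'.links → (a = C ∨ b = C) → c ≠ X)
    (hAB : A ≠ B) (hAC : A ≠ C) (hBC : B ≠ C)
    (v w : V) (hrel : drRel Θ' (mySwitch X C) v w) :
    drRel Θ (mySwitch X C) v w ∧ s(v, w) ≠ s(X, C) := by
  have hpar : MLLLink.par A B C ∈ Θ'.links := by
    rw [h']; exact Finset.mem_insert_self _ _
  obtain ⟨L, hLmem, hsw⟩ := hrel
  rw [h', Finset.mem_insert] at hLmem
  rcases hLmem with rfl | hLe
  · -- the new par link
    rcases hsw with ⟨hs, hv, hw⟩ | ⟨hs, hv, hw⟩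
    · refine ⟨⟨MLLLink.tensor A B C, hL, Or.inl ⟨hv, hw⟩⟩, ?_⟩
      rw [hv, hw]; exact (mySwitch_par_avoid hAB).1 hs
    · refine ⟨⟨MLLLink.tensor A B C, hL, Or.inr ⟨hv, hw⟩⟩, ?_⟩
      rw [hv, hw]; exact (mySwitch_par_avoid hAB).2 hs
  · have hLΘ : L ∈ Θ.links := Finset.mem_of_mem_erase hLe
    have hLΘ' : L ∈ Θ'.links := by
      rw [h']; exact Finset.mem_insert_of_mem hLe
    refine ⟨⟨L, hLΘ, hsw⟩, ?_⟩
    match L with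
    | .idl c₁ c₂ =>
        obtain ⟨rfl, rfl⟩ := hsw
        intro heq
        rw [Sym2.eq_iff] at heq
        have hCc : C ∈ (MLLLink.idl v w).concls := by
          rcases heq with ⟨h1, h2⟩ | ⟨h1, h2⟩ <;> simp [MLLLink.concls, h1, h2]
        have := Θ'.concl_unique C _ hLΘ' _ hpar hCc (by simp [MLLLink.concls])
        cases this
    | .tensor a b c =>
        intro heq
        have hvw : (v = a ∨ v = b) ∧ w = c := by
          rcases hsw with ⟨rfl, rfl⟩ | ⟨rfl, rfl⟩ <;> simp
        obtain ⟨hv, rfl⟩ := hvw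
        rw [Sym2.eq_iff] at heq
        rcases heq with ⟨h1, rfl⟩ | ⟨h1, rfl⟩
        · -- conclusion is C: contradiction with uniqueness against the par link
          have := Θ'.concl_unique w _ hLΘ' _ hpar (by simp [MLLLink.concls])
            (by simp [MLLLink.concls])
          cases this
        · -- premise is C, conclusion is X: excluded by hT
          exact hT a b w hLΘ' (by rcases hv with rfl | rfl <;> [left; right] <;> exact h1) rfl
    | .par a b c =>
        have hab : a ≠ b := by
          have := Θ.nodup _ hLΘ
          simp [MLLLink.prems, MLLLink.concls] at this
          tauto
        rcases hsw with ⟨hs, rfl, rfl⟩ | ⟨hs, rfl, rfl⟩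
        · exact (mySwitch_par_avoid hab).1 hs
        · exact (mySwitch_par_avoid hab).2 hs

lemma main_core (Θ Θ' : MLLProofStructure V) (A B C X : V)
    (hΘ : IsProofNet Θ)
    (hL : MLLLink.tensor A B C ∈ Θ.links)
    (h' : Θ'.links =
      insert (MLLLink.par A B C) (Θ.links.erase (MLLLink.tensor A B C)))
    (hT : ∀ a b c : V, MLLLink.tensor a b c ∈ Θ'.links → (a = C ∨ b = C) → c ≠ X)
    (hAB : A ≠ B) (hAC : A ≠ C) (hBC : B ≠ C) (hX : X = A ∨ X = B) :
    ¬ (drGraph Θ' (mySwitch X C)).Connected := by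
  intro hconn
  set S' : MLLLink V → Bool := mySwitch X C with hS'
  obtain ⟨hac, hco⟩ := hΘ S'
  have hXC : X ≠ C := by rcases hX with rfl | rfl <;> assumption
  have hadj : (drGraph Θ S').Adj X C := by
    rw [drGraph, SimpleGraph.fromRel_adj]
    refine ⟨hXC, Or.inl ⟨MLLLink.tensor A B C, hL, ?_⟩⟩
    rcases hX with rfl | rfl
    · exact Or.inl ⟨rfl, rfl⟩
    · exact Or.inr ⟨rfl, rfl⟩
  have hbr : (drGraph Θ S').IsBridge s(X, C) :=
    (SimpleGraph.isAcyclic_iff_forall_adj_isBridge.mp hac) hadj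
  have hnr : ¬ ((drGraph Θ S').deleteEdges {s(X, C)}).Reachable X C :=
    SimpleGraph.isBridge_iff.mp hbr
  have hle : drGraph Θ' S' ≤ (drGraph Θ S').deleteEdges {s(X, C)} := by
    intro v w h
    rw [drGraph, SimpleGraph.fromRel_adj] at h
    obtain ⟨hne, hrel⟩ := h
    rw [SimpleGraph.deleteEdges_adj]
    rcases hrel with hrel | hrel
    · obtain ⟨hr, hne2⟩ := key_rel Θ Θ' A B C X hL h' hT hAB hAC hBC v w hrel
      exact ⟨(SimpleGraph.fromRel_adj _ v w).mpr ⟨hne, Or.inl hr⟩, by simpa using hne2⟩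
    · obtain ⟨hr, hne2⟩ := key_rel Θ Θ' A B C X hL h' hT hAB hAC hBC w v hrel
      refine ⟨(SimpleGraph.fromRel_adj _ v w).mpr ⟨hne, Or.inr hr⟩, ?_⟩
      rw [Sym2.eq_swap] at hne2
      simpa using hne2
  exact hnr ((hconn.preconnected X C).mono hle)

end Aux
/-- Replacing a single ⊗-link of an MLL proof net by a ⅋-link with the same
premises yields a structure with a disconnected DR-graph: not a proof net. -/
theorem tensor_to_par_disconnected (Θ Θ' : MLLProofStructure V)
    (hΘ : IsProofNet Θ) (A B C : V) (hL : MLLLink.tensor A B C ∈ Θ.links)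
    (h' : Θ'.links =
      insert (MLLLink.par A B C) (Θ.links.erase (MLLLink.tensor A B C))) :
    ∃ S' : MLLLink V → Bool, ¬ (drGraph Θ' S').Connected := by
  classical
  have hnd := Θ.nodup _ hL
  simp [MLLLink.prems, MLLLink.concls] at hnd
  obtain ⟨⟨hAB, hAC⟩, hBC⟩ := hnd
  by_cases hP : ∃ a b : V, MLLLink.tensor a b B ∈ Θ'.links ∧ (a = C ∨ b = C)
  · -- some tensor below C concludes B: target the edge s(A, C) instead
    obtain ⟨a₀, b₀, hT₀, hc₀⟩ := hP
    refine ⟨mySwitch A C, main_core Θ Θ' A B C A hΘ hL h' ?_ hAB hAC hBC (Or.inl rfl)⟩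
    intro a b c hmem hc hcA
    have hCp : C ∈ (MLLLink.tensor a b c).prems := by
      rcases hc with rfl | rfl <;> simp [MLLLink.prems]
    have hCp₀ : C ∈ (MLLLink.tensor a₀ b₀ B).prems := by
      rcases hc₀ with rfl | rfl <;> simp [MLLLink.prems]
    have heq := Θ'.prem_unique C _ hmem _ hT₀ hCp hCp₀
    injection heq with e1 e2 e3
    exact hAB (hcA ▸ e3)
  · -- no tensor below C concludes B: target the edge s(B, C)
    refine ⟨mySwitch B C, main_core Θ Θ' A B C B hΘ hL h' ?_ hAB hAC hBC (Or.inr rfl)⟩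
    intro a b c hmem hc hcB
    exact hP ⟨a, b, hcB ▸ hmem, hc⟩
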